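/- For every θ ∈ (0,1), the quantity 1 − (1 − β + α e^{−2πiθ}) d_θ (1 − e^{−2πiθ})^{-1} has modulus at least 1; in particular it is bounded away from zero uniformly in θ on any interval [δ, 1−δ] with 0 < δ < 1/2. -/

import Mathlib

open Real Set

noncomputable section

/-- `d_θ = (β − α)(1 − e^{−2πiθ})⁻¹(α + (1 − β)e^{−2πiθ})`. -/
def dTheta (α β θ : ℝ) : ℂ :=
  ((β : ℂ) - α) * (1 - Complex.exp (-(2 * Real.pi * Complex.I * θ)))⁻¹ *
    ((α : ℂ) + (1 - β) * Complex.exp (-(2 * Real.pi * Complex.I * θ)))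

theorem stmt_9 (α β : ℝ) (hα : 0 < α) (hαβ : α < β) (hβ : β < 1)
    (θ : ℝ) (hθ : θ ∈ Ioo (0:ℝ) 1) :
    1 ≤ ‖(1 : ℂ) - ((1 : ℂ) - β + α * Complex.exp (-(2 * Real.pi * Complex.I * θ))) *
        dTheta α β θ * (1 - Complex.exp (-(2 * Real.pi * Complex.I * θ)))⁻¹‖ := by
  obtain ⟨hθ0, hθ1⟩ := hθ
  have hπ := Real.pi_pos
  set z : ℂ := Complex.exp (-(2 * Real.pi * Complex.I * θ)) with hzdef
  have hz_eq : z = Complex.exp (((-(2 * Real.pi * θ) : ℝ)) * Complex.I) := by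
    rw [hzdef]; push_cast; ring_nf
  have habs : ‖z‖ = 1 := by
    rw [hz_eq]; exact Complex.norm_exp_ofReal_mul_I _
  have hre : z.re = Real.cos (2 * Real.pi * θ) := by
    rw [hz_eq]
    rw [Complex.exp_ofReal_mul_I_re]
    rw [Real.cos_neg]
  have hns : Complex.normSq z = 1 := by
    rw [← Complex.sq_norm, habs]; norm_num
  have hcs : z.re ^ 2 + z.im ^ 2 = 1 := by
    have := Complex.normSq_apply z
    nlinarith [hns, this]
  have hclt : z.re < 1 := by
    rw [hre]
    refine lt_of_le_of_ne (Real.cos_le_one _) ?_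
    intro h
    have h2 : (2 * Real.pi * θ) = 0 := by
      rw [← Real.cos_eq_one_iff_of_lt_of_lt (by nlinarith) (by nlinarith)]
      exact h
    nlinarith
  have hcge : -1 ≤ z.re := by nlinarith [sq_nonneg z.im, sq_nonneg (z.re + 1)]
  have h1z : (1 : ℂ) - z ≠ 0 := by
    intro h
    have : z = 1 := by linear_combination -h
    rw [this] at hclt
    simp at hclt
  have h1 : z * (starRingEnd ℂ) z = 1 := by
    rw [Complex.mul_conj, hns]; norm_num
  have h2 : z + (starRingEnd ℂ) z = 2 * (z.re : ℂ) := by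
    rw [Complex.add_conj]; push_cast; ring
  have hz2 : z ^ 2 = 2 * (z.re : ℂ) * z - 1 := by
    linear_combination z * h2 - h1
  set r : ℝ := 2 * z.re - 2 - (β - α) * (α ^ 2 + (1 - β) ^ 2 + 2 * α * (1 - β) * z.re) with hrdef
  have hE : (1 : ℂ) - ((1 : ℂ) - β + α * z) * dTheta α β θ * (1 - z)⁻¹
      = z * (r : ℂ) / (1 - z) ^ 2 := by
    unfold dTheta
    rw [← hzdef]
    rw [eq_div_iff (pow_ne_zero 2 h1z), hrdef]
    push_cast
    have hu : ((1 : ℂ) - z)⁻¹ * (1 - z) = 1 := inv_mul_cancel₀ h1z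
    linear_combination (1 - ((β : ℂ) - α) * α * (1 - β)) * hz2 +
      (-((((β : ℂ) - α) * ((1 : ℂ) - β + α * z)) * ((α : ℂ) + (1 - β) * z)) *
        (((1 : ℂ) - z)⁻¹ * (1 - z) + 1)) * hu
  rw [hE]
  have hd : ‖(1 : ℂ) - z‖ ^ 2 = 2 - 2 * z.re := by
    rw [Complex.sq_norm, Complex.normSq_apply]
    simp only [Complex.sub_re, Complex.sub_im, Complex.one_re, Complex.one_im]
    nlinarith [hcs]
  have hnorm : ‖z * (r : ℂ) / (1 - z) ^ 2‖ = |r| / (2 - 2 * z.re) := by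
    rw [norm_div, norm_mul, norm_pow, hd]
    rw [habs, Complex.norm_real, Real.norm_eq_abs, one_mul]
  rw [hnorm]
  have hpos : 0 < 2 - 2 * z.re := by linarith
  rw [le_div_iff₀ hpos, one_mul]
  have hfac : 0 ≤ (β - α) * (α ^ 2 + (1 - β) ^ 2 + 2 * α * (1 - β) * z.re) := by
    apply mul_nonneg (by linarith)
    nlinarith [sq_nonneg (α - (1 - β)), mul_nonneg (mul_nonneg hα.le (by linarith : (0:ℝ) ≤ 1 - β)) (by linarith : (0:ℝ) ≤ 1 + z.re)]
  have hrneg : r ≤ -(2 - 2 * z.re) := by rw [hrdef]; linarith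
  have : |r| = -r := abs_of_neg (by linarith)
  linarith [this, hrneg]

end
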